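/- (Expansion of x^n in q-Bernoulli polynomials.) For every integer n ≥ 1 and all x ∈ ℂ: x^n = (2^n / ((−1;q)_n [n+1]_q)) · Σ_{k=0}^{n} [n+1 choose k]_q ((−1;q)_{n+1−k}/2^{n+1−k}) B_{k,q}(x). (This is the q-analogue of x^n = (1/(n+1)) Σ_{k=0}^{n} C(n+1,k) B_k(x).) -/

import Mathlib

open Finset PowerSeries

/-- The `q`-number `[n]_q = (1 - q^n)/(1 - q)`. -/
noncomputable def qNum (q : ℂ) (n : ℕ) : ℂ := (1 - q ^ n) / (1 - q)

/-- The `q`-factorial `[n]_q!`. -/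
noncomputable def qFact (q : ℂ) : ℕ → ℂ
  | 0 => 1
  | n + 1 => qNum q (n + 1) * qFact q n

/-- The `q`-shifted factorial `(a; q)_n = ∏_{j=0}^{n-1} (1 - q^j a)`. -/
noncomputable def qShift (a q : ℂ) (n : ℕ) : ℂ := ∏ j ∈ Finset.range n, (1 - q ^ j * a)

/-- The Gaussian binomial coefficient `[n choose k]_q = (q;q)_n / ((q;q)_{n-k} (q;q)_k)`. -/
noncomputable def qBinom (q : ℂ) (n k : ℕ) : ℂ :=
  qShift q q n / (qShift q q (n - k) * qShift q q k)

/-- The formal power series (in `t`) `𝓔_q(tx) = Σ_{n≥0} (-1;q)_n (x)^n t^n / (2^n [n]_q!)`. -/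
noncomputable def qExp (q x : ℂ) : PowerSeries ℂ :=
  PowerSeries.mk fun n => qShift (-1) q n * x ^ n / (2 ^ n * qFact q n)

/-- The generating series `Σ_{n≥0} a_n t^n / [n]_q!` of a sequence `a`. -/
noncomputable def qGen (q : ℂ) (a : ℕ → ℂ) : PowerSeries ℂ :=
  PowerSeries.mk fun n => a n / qFact q n

/-- The `q`-addition `(x ⊕_q y)^n`. -/
noncomputable def qAdd (q x y : ℂ) (n : ℕ) : ℂ :=
  ∑ k ∈ Finset.range (n + 1),
    qBinom q n k * (qShift (-1) q k * qShift (-1) q (n - k) / 2 ^ n) * x ^ k * y ^ (n - k)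


lemma pow_ne_one_of_abs_lt {q : ℂ} (hq1 : ‖q‖ < 1) {m : ℕ} (hm : 1 ≤ m) :
    q ^ m ≠ 1 := by
  intro h
  have h2 : ‖q ^ m‖ < 1 := by
    rw [norm_pow]
    exact pow_lt_one₀ (norm_nonneg q) hq1 (by omega)
  rw [h] at h2; simp at h2

lemma q_ne_one {q : ℂ} (hq1 : ‖q‖ < 1) : q ≠ 1 := by
  intro h; rw [h] at hq1; simp at hq1

lemma qNum_ne_zero {q : ℂ} (hq1 : ‖q‖ < 1) {m : ℕ} (hm : 1 ≤ m) : qNum q m ≠ 0 := by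
  unfold qNum
  exact div_ne_zero (sub_ne_zero.mpr (Ne.symm (pow_ne_one_of_abs_lt hq1 hm)))
    (sub_ne_zero.mpr (Ne.symm (q_ne_one hq1)))

lemma qFact_ne_zero {q : ℂ} (hq1 : ‖q‖ < 1) (m : ℕ) : qFact q m ≠ 0 := by
  induction m with
  | zero => simp [qFact]
  | succ k ih => exact mul_ne_zero (qNum_ne_zero hq1 (by omega)) ih

lemma qShift_neg_ne_zero {q : ℂ} (hq1 : ‖q‖ < 1) (m : ℕ) : qShift (-1) q m ≠ 0 := by
  unfold qShift
  apply Finset.prod_ne_zero_iff.mpr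
  intro j _
  rcases Nat.eq_zero_or_pos j with h | h
  · subst h; norm_num
  · intro hc
    have hj : q ^ j = -1 := by linear_combination hc
    have h2 : ‖q ^ j‖ < 1 := by
      rw [norm_pow]
      exact pow_lt_one₀ (norm_nonneg q) hq1 (by omega)
    rw [hj] at h2; simp at h2

lemma qShift_qq {q : ℂ} (hq1 : ‖q‖ < 1) (m : ℕ) :
    qShift q q m = (1 - q) ^ m * qFact q m := by
  induction m with
  | zero => simp [qShift, qFact]
  | succ k ih =>
      rw [qShift, Finset.prod_range_succ, ← qShift, ih]
      have hq : (1 - q) ≠ 0 := sub_ne_zero.mpr (Ne.symm (q_ne_one hq1))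
      have h : (1 - q) * qNum q (k + 1) = 1 - q ^ (k + 1) := by
        unfold qNum; field_simp
      show (1 - q) ^ k * qFact q k * (1 - q ^ k * q) = (1 - q) ^ (k + 1) * qFact q (k + 1)
      rw [qFact]
      linear_combination (-(1 - q) ^ k * qFact q k) * h

lemma qBinom_eq {q : ℂ} (hq1 : ‖q‖ < 1) {m k : ℕ} (hk : k ≤ m) :
    qBinom q m k = qFact q m / (qFact q (m - k) * qFact q k) := by
  unfold qBinom
  rw [qShift_qq hq1, qShift_qq hq1, qShift_qq hq1]
  have hq : (1 - q) ≠ 0 := sub_ne_zero.mpr (Ne.symm (q_ne_one hq1))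
  have h : (1 - q) ^ (m - k) * (1 - q) ^ k = (1 - q) ^ m := by
    rw [← pow_add, Nat.sub_add_cancel hk]
  rw [show (1 - q) ^ (m - k) * qFact q (m - k) * ((1 - q) ^ k * qFact q k)
      = (1 - q) ^ m * (qFact q (m - k) * qFact q k) by rw [← h]; ring]
  rw [mul_div_mul_left _ _ (pow_ne_zero m hq)]

lemma qExp_zero (q : ℂ) : qExp q 0 = 1 := by
  ext n
  rw [qExp, coeff_mk]
  cases n with
  | zero => simp [qShift, qFact]
  | succ k => simp

/-- Expansion of `x^n` in `q`-Bernoulli polynomials: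
`x^n = (2^n/((-1;q)_n [n+1]_q)) Σ_{k=0}^n [n+1 choose k]_q ((-1;q)_{n+1-k}/2^{n+1-k}) B_{k,q}(x)`. -/
theorem pow_eq_sum_qBernoulli (q : ℂ) (hq0 : 0 < ‖q‖) (hq1 : ‖q‖ < 1)
    (B : ℂ → ℂ → ℕ → ℂ)
    (hB : ∀ x y : ℂ, qGen q (B x y) * (qExp q 1 - 1) = PowerSeries.X * qExp q x * qExp q y)
    (n : ℕ) (hn : 1 ≤ n) (x : ℂ) :
    x ^ n = 2 ^ n / (qShift (-1) q n * qNum q (n + 1)) *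
      ∑ k ∈ Finset.range (n + 1),
        qBinom q (n + 1) k * (qShift (-1) q (n + 1 - k) / 2 ^ (n + 1 - k)) * B x 0 k := by
  have hF := qFact_ne_zero hq1
  have hS := qShift_neg_ne_zero hq1
  have h1 : qGen q (B x 0) * (qExp q 1 - 1) = PowerSeries.X * qExp q x := by
    have h := hB x 0
    rwa [qExp_zero, mul_one] at h
  have h2 := congrArg (PowerSeries.coeff (R := ℂ) (n + 1)) h1
  rw [PowerSeries.coeff_succ_X_mul, PowerSeries.coeff_mul,
    Finset.Nat.sum_antidiagonal_eq_sum_range_succ_mk] at h2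
  simp only [qGen, qExp, coeff_mk, map_sub, PowerSeries.coeff_one] at h2
  rw [Finset.sum_range_succ] at h2
  have hzero : B x 0 (n + 1) / qFact q (n + 1) *
      (qShift (-1) q (n + 1 - (n + 1)) * 1 ^ (n + 1 - (n + 1)) /
        (2 ^ (n + 1 - (n + 1)) * qFact q (n + 1 - (n + 1))) -
        if n + 1 - (n + 1) = 0 then 1 else 0) = 0 := by
    simp [qShift, qFact]
  rw [hzero, add_zero] at h2
  have hE : ∑ k ∈ Finset.range (n + 1), B x 0 k / qFact q k *
      (qShift (-1) q (n + 1 - k) / (2 ^ (n + 1 - k) * qFact q (n + 1 - k)))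
      = qShift (-1) q n * x ^ n / (2 ^ n * qFact q n) := by
    rw [← h2]
    apply Finset.sum_congr rfl
    intro k hk
    have hk' : k < n + 1 := Finset.mem_range.mp hk
    have : ¬ (n + 1 - k = 0) := by omega
    rw [if_neg this, sub_zero, one_pow, mul_one]
  have hsum : ∑ k ∈ Finset.range (n + 1),
      qBinom q (n + 1) k * (qShift (-1) q (n + 1 - k) / 2 ^ (n + 1 - k)) * B x 0 k
      = qFact q (n + 1) * ∑ k ∈ Finset.range (n + 1), B x 0 k / qFact q k *
        (qShift (-1) q (n + 1 - k) / (2 ^ (n + 1 - k) * qFact q (n + 1 - k))) := by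
    rw [Finset.mul_sum]
    apply Finset.sum_congr rfl
    intro k hk
    have hk' : k < n + 1 := Finset.mem_range.mp hk
    rw [qBinom_eq hq1 (by omega : k ≤ n + 1)]
    have h2k : (2 : ℂ) ^ (n + 1 - k) ≠ 0 := pow_ne_zero _ two_ne_zero
    field_simp
  rw [hsum, hE]
  have hFn1 : qFact q (n + 1) = qNum q (n + 1) * qFact q n := rfl
  rw [hFn1]
  have hN : qNum q (n + 1) ≠ 0 := qNum_ne_zero hq1 (by omega)
  have h2n : (2 : ℂ) ^ n ≠ 0 := pow_ne_zero _ two_ne_zero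
  have key : ∀ a b c d e : ℂ, a ≠ 0 → b ≠ 0 → c ≠ 0 → d ≠ 0 →
      d / (a * b) * (b * c * (a * e / (d * c))) = e := by
    intro a b c d e ha hb hc hd
    field_simp
  exact (key _ _ _ _ _ (hS n) hN (hF n) h2n).symm
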